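/- Parseval/Plancherel pricing formula along a shifted contour: let K > 0, r ∈ ℝ, T ∈ ℝ, fix a real number u_i > 1, and let q : ℝ → ℝ be a probability density (q ≥ 0, ∫_ℝ q = 1) such that s ↦ e^{u_i·s}·q(s) is Lebesgue integrable. Define the generalized characteristic function q̂(z) = ∫_ℝ e^{izs}·q(s) ds for complex z with Im(z) = −u_i, and define Ĉ_T(u) = −K^{iu+1}/(u² − iu) for complex u with Im(u) = u_i, where K^{iu+1} = exp((iu+1)·log K). Assume the shifted inversion formula holds: for all s ∈ ℝ, q(s) = (1/(2π))·∫_ℝ e^{−i(u_r + i·u_i)s}·q̂(u_r + i·u_i) du_r. Then the discounted call price satisfies e^{−rT}·∫_ℝ max(e^s − K, 0)·q(s) ds = (e^{−rT}/(2π))·∫_ℝ Ĉ_T(u_r + i·u_i)·q̂(−(u_r + i·u_i)) du_r. -/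

import Mathlib

open MeasureTheory Set Filter
open scoped Real FourierTransform Topology

lemma cexp_integrableOn_Ioi (c : ℂ) (hc : c.re < 0) (a : ℝ) :
    IntegrableOn (fun t : ℝ => Complex.exp (c * t)) (Ioi a) := by
  have h0 : (0:ℝ) < -c.re := by linarith
  refine (exp_neg_integrableOn_Ioi a h0).mono' ?_ ?_
  · exact (Complex.continuous_exp.comp
      (continuous_const.mul Complex.continuous_ofReal)).aestronglyMeasurable
  · filter_upwards with t
    have h1 : (c * (t:ℂ)).re = c.re * t := by simp [Complex.mul_re]
    simp only [Complex.norm_exp, h1]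
    apply le_of_eq
    ring_nf

lemma integral_cexp_Ioi (c : ℂ) (hc : c.re < 0) (a : ℝ) :
    ∫ t in Ioi a, Complex.exp (c * t) = -Complex.exp (c * a) / c := by
  have hc0 : c ≠ 0 := fun h => by simp [h] at hc
  have hderiv : ∀ x ∈ Ici a, HasDerivAt (fun t : ℝ => Complex.exp (c * t) / c)
      (Complex.exp (c * x)) x := by
    intro x _
    have h1 : HasDerivAt (fun t : ℝ => c * (t:ℂ)) c x := by
      simpa using ((hasDerivAt_id x).ofReal_comp).const_mul c
    have h2 := h1.cexp
    have h3 := h2.div_const c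
    rwa [mul_div_cancel_right₀ _ hc0] at h3
  have htend : Tendsto (fun t : ℝ => Complex.exp (c * t) / c) atTop (𝓝 0) := by
    rw [tendsto_zero_iff_norm_tendsto_zero]
    have heq : (fun t : ℝ => ‖Complex.exp (c * t) / c‖)
        = fun t : ℝ => Real.exp (c.re * t) / ‖c‖ := by
      ext t
      have h1 : (c * (t:ℂ)).re = c.re * t := by simp [Complex.mul_re]
      simp [Complex.norm_exp, h1]
    rw [heq]
    have hbot : Tendsto (fun t : ℝ => c.re * t) atTop atBot :=
      tendsto_id.const_mul_atTop_of_neg hc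
    simpa using (Real.tendsto_exp_atBot.comp hbot).div_const ‖c‖
  have := integral_Ioi_of_hasDerivAt_of_tendsto' hderiv (cexp_integrableOn_Ioi c hc a) htend
  rw [this]
  ring

/-- The generalized characteristic function `q̂(z) = ∫ e^{izs} q(s) ds` of a density `q`. -/
noncomputable def genCharFun (q : ℝ → ℝ) (z : ℂ) : ℂ :=
  ∫ s : ℝ, Complex.exp (Complex.I * z * (s : ℂ)) * (q s : ℂ)

/-- The Fourier transform of the call payoff, `Ĉ_T(u) = -K^{iu+1}/(u² - iu)`. -/
noncomputable def callPayoffFT (K : ℝ) (u : ℂ) : ℂ :=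
  -Complex.exp ((Complex.I * u + 1) * (Real.log K : ℂ)) / (u ^ 2 - Complex.I * u)

lemma Iu_fact (u : ℂ) : u ^ 2 - Complex.I * u = -(Complex.I * u * (Complex.I * u + 1)) := by
  linear_combination (u^2) * Complex.I_sq

lemma payoff_ft (K : ℝ) (hK : 0 < K) (u : ℂ) (hu : 1 < u.im) :
    ∫ t : ℝ, ((max (Real.exp t - K) 0 : ℝ) : ℂ) * Complex.exp (Complex.I * u * t)
      = callPayoffFT K u := by
  set a := Real.log K with ha
  have h1re : (Complex.I * u + 1).re < 0 := by
    simp only [Complex.add_re, Complex.mul_re, Complex.I_re, Complex.I_im, Complex.one_re]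
    simp only [zero_mul, one_mul, zero_sub]
    linarith
  have h2re : (Complex.I * u).re < 0 := by
    simp only [Complex.mul_re, Complex.I_re, Complex.I_im]
    simp only [zero_mul, one_mul, zero_sub]
    linarith
  have h1 : (Complex.I * u + 1) ≠ 0 := fun h => by simp [h] at h1re
  have h2 : (Complex.I * u) ≠ 0 := fun h => by simp [h] at h2re
  have heq : (fun t : ℝ => ((max (Real.exp t - K) 0 : ℝ) : ℂ) * Complex.exp (Complex.I * u * t))
      = (Ioi a).indicator (fun t : ℝ =>
          Complex.exp ((Complex.I * u + 1) * t) - K * Complex.exp (Complex.I * u * t)) := by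
    ext t
    by_cases ht : t ∈ Ioi a
    · rw [indicator_of_mem ht]
      have hKt : K < Real.exp t := by
        rw [← Real.exp_log hK]; exact Real.exp_lt_exp.2 ht
      rw [max_eq_left (by linarith)]
      have hexp : Complex.exp ((Complex.I * u + 1) * t)
          = Complex.exp (Complex.I * u * t) * (Real.exp t : ℂ) := by
        rw [add_mul, Complex.exp_add, one_mul, ← Complex.ofReal_exp]
      rw [hexp]
      push_cast
      ring
    · rw [indicator_of_notMem ht]
      have : Real.exp t ≤ K := by
        rw [← Real.exp_log hK]; exact Real.exp_le_exp.2 (not_lt.1 ht)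
      rw [max_eq_right (by linarith)]
      simp
  rw [heq, integral_indicator measurableSet_Ioi]
  rw [integral_sub (cexp_integrableOn_Ioi _ h1re a)
    ((cexp_integrableOn_Ioi _ h2re a).const_mul _)]
  rw [integral_const_mul, integral_cexp_Ioi _ h1re a, integral_cexp_Ioi _ h2re a]
  have hKexp : Complex.exp ((Complex.I * u + 1) * a)
      = (K : ℂ) * Complex.exp (Complex.I * u * a) := by
    rw [add_mul, Complex.exp_add, one_mul, ← Complex.ofReal_exp, ha]
    rw [Real.exp_log hK]
    ring
  unfold callPayoffFT
  rw [Iu_fact, hKexp]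
  field_simp [show u ≠ 0 from right_ne_zero_of_mul h2]
  ring

lemma contour_norm_lower (ui : ℝ) (hui : 1 < ui) (ur : ℝ) :
    min 1 (ui - 1) * (1 + ur ^ 2)
      ≤ ‖((ur:ℂ) + Complex.I * ui) ^ 2 - Complex.I * ((ur:ℂ) + Complex.I * ui)‖ := by
  set u : ℂ := (ur:ℂ) + Complex.I * ui with hu
  set c : ℝ := min 1 (ui - 1) with hc
  have hc0 : 0 < c := lt_min one_pos (by linarith)
  have hfac : u ^ 2 - Complex.I * u = u * (u - Complex.I) := by ring
  rw [hfac, norm_mul]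
  have hnu : ‖u‖ ^ 2 = ur ^ 2 + ui ^ 2 := by
    rw [hu]
    rw [show (ur:ℂ) + Complex.I * ui = (ur:ℂ) + (ui:ℂ) * Complex.I by ring]
    rw [Complex.sq_norm, Complex.normSq_add_mul_I]
  have hnv : ‖u - Complex.I‖ ^ 2 = ur ^ 2 + (ui - 1) ^ 2 := by
    rw [hu]
    rw [show (ur:ℂ) + Complex.I * ui - Complex.I = (ur:ℂ) + ((ui - 1 : ℝ):ℂ) * Complex.I by
      push_cast; ring]
    rw [Complex.sq_norm, Complex.normSq_add_mul_I]
  have hkey : (c * (1 + ur ^ 2)) ^ 2 ≤ (‖u‖ * ‖u - Complex.I‖) ^ 2 := by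
    rw [mul_pow, mul_pow, hnu, hnv]
    have h1 : c ≤ 1 := min_le_left _ _
    have h2 : c ≤ ui - 1 := min_le_right _ _
    have hA : c ^ 2 ≤ 1 := by nlinarith
    have hB : c ^ 2 ≤ (ui - 1) ^ 2 := by nlinarith
    have hC : (1:ℝ) ≤ ui ^ 2 := by nlinarith
    nlinarith [mul_le_mul_of_nonneg_left hA (sq_nonneg (ur ^ 2)),
      mul_le_mul_of_nonneg_left hA (sq_nonneg ur),
      mul_le_mul_of_nonneg_left hB (sq_nonneg ur),
      mul_le_mul_of_nonneg_left hC (sq_nonneg (ui - 1))]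
  have h0 : (0:ℝ) ≤ c * (1 + ur ^ 2) := by positivity
  have h1 : (0:ℝ) ≤ ‖u‖ * ‖u - Complex.I‖ := by positivity
  nlinarith

lemma contour_denom_ne (ui : ℝ) (hui : 1 < ui) (ur : ℝ) :
    ((ur:ℂ) + Complex.I * ui) ^ 2 - Complex.I * ((ur:ℂ) + Complex.I * ui) ≠ 0 := by
  intro h
  have := contour_norm_lower ui hui ur
  rw [h, norm_zero] at this
  have hc0 : (0:ℝ) < min 1 (ui - 1) := lt_min one_pos (by linarith)
  nlinarith [sq_nonneg ur]

lemma contour_norm_le (K ui : ℝ) (hK : 0 < K) (hui : 1 < ui) (ur : ℝ) :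
    ‖callPayoffFT K ((ur:ℂ) + Complex.I * ui)‖
      ≤ (Real.exp ((1 - ui) * Real.log K) / min 1 (ui - 1)) * ((1 + ur ^ 2)⁻¹) := by
  set u : ℂ := (ur:ℂ) + Complex.I * ui with hu
  set c : ℝ := min 1 (ui - 1) with hc
  have hc0 : 0 < c := lt_min one_pos (by linarith)
  have hnum : ‖-Complex.exp ((Complex.I * u + 1) * (Real.log K : ℂ))‖
      = Real.exp ((1 - ui) * Real.log K) := by
    rw [norm_neg, Complex.norm_exp]
    congr 1
    have him : (Complex.I * u + 1).re = 1 - ui := by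
      simp [hu, Complex.add_re, Complex.mul_re]
      ring
    have : ((Complex.I * u + 1) * (Real.log K : ℂ)).re = (Complex.I * u + 1).re * Real.log K := by
      simp [Complex.mul_re]
    rw [this, him]
  unfold callPayoffFT
  rw [norm_div, hnum]
  have hlow := contour_norm_lower ui hui ur
  have hpos : (0:ℝ) < c * (1 + ur ^ 2) := by positivity
  calc Real.exp ((1 - ui) * Real.log K) / ‖u ^ 2 - Complex.I * u‖
      ≤ Real.exp ((1 - ui) * Real.log K) / (c * (1 + ur ^ 2)) := by
        apply div_le_div_of_nonneg_left (Real.exp_pos _).le hpos hlow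
    _ = (Real.exp ((1 - ui) * Real.log K) / c) * ((1 + ur ^ 2)⁻¹) := by
        field_simp
  done

lemma contour_continuous (K ui : ℝ) (hui : 1 < ui) :
    Continuous (fun ur : ℝ => callPayoffFT K ((ur:ℂ) + Complex.I * ui)) := by
  unfold callPayoffFT
  have hden : Continuous (fun ur : ℝ =>
      ((ur:ℂ) + Complex.I * ui) ^ 2 - Complex.I * ((ur:ℂ) + Complex.I * ui)) := by

    continuity
  apply Continuous.div _ hden (fun ur => contour_denom_ne ui hui ur)
  continuity

lemma contour_integrable (K ui : ℝ) (hK : 0 < K) (hui : 1 < ui) :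
    Integrable (fun ur : ℝ => callPayoffFT K ((ur:ℂ) + Complex.I * ui)) := by
  apply Integrable.mono'
    (integrable_inv_one_add_sq.const_mul (Real.exp ((1 - ui) * Real.log K) / min 1 (ui - 1)))
    (contour_continuous K ui hui).aestronglyMeasurable
  filter_upwards with ur
  exact contour_norm_le K ui hK hui ur

lemma contour_inversion (K ui : ℝ) (hK : 0 < K) (hui : 1 < ui) (s : ℝ) :
    ∫ ur : ℝ, callPayoffFT K ((ur:ℂ) + Complex.I * ui) * Complex.exp (-Complex.I * ur * s)
      = ((2 * Real.pi : ℝ) : ℂ) * ((max (Real.exp s - K) 0 * Real.exp (-ui * s) : ℝ) : ℂ) := by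
  set h : ℝ → ℂ := fun t => ((max (Real.exp t - K) 0 * Real.exp (-ui * t) : ℝ) : ℂ) with hh
  have hcont : Continuous h := by
    apply Complex.continuous_ofReal.comp
    apply Continuous.mul
    · exact (Real.continuous_exp.sub continuous_const).max continuous_const
    · exact Real.continuous_exp.comp (continuous_const.mul continuous_id)
  have hint : Integrable h := by
    have heq : h = (Ioi (Real.log K)).indicator
        (fun t => (((Real.exp t - K) * Real.exp (-ui * t) : ℝ) : ℂ)) := by
      ext t
      by_cases ht : t ∈ Ioi (Real.log K)
      · rw [indicator_of_mem ht]
        have hKt : K < Real.exp t := by rw [← Real.exp_log hK]; exact Real.exp_lt_exp.2 ht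
        rw [hh]; simp only; rw [max_eq_left (by linarith)]
      · rw [indicator_of_notMem ht]
        have hKt : Real.exp t ≤ K := by
          rw [← Real.exp_log hK]; exact Real.exp_le_exp.2 (not_lt.1 ht)
        rw [hh]; simp only; rw [max_eq_right (by linarith)]; simp
    rw [heq, integrable_indicator_iff measurableSet_Ioi]
    apply ((exp_neg_integrableOn_Ioi (Real.log K)
      (show (0:ℝ) < ui - 1 by linarith))).mono'
    · apply Continuous.aestronglyMeasurable
      apply Complex.continuous_ofReal.comp
      exact (Real.continuous_exp.sub continuous_const).mul
        (Real.continuous_exp.comp (continuous_const.mul continuous_id))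
    · filter_upwards [ae_restrict_mem measurableSet_Ioi] with t ht
      have hKt : K < Real.exp t := by rw [← Real.exp_log hK]; exact Real.exp_lt_exp.2 ht
      have hn : ‖(((Real.exp t - K) * Real.exp (-ui * t) : ℝ) : ℂ)‖
          = (Real.exp t - K) * Real.exp (-ui * t) := by
        rw [Complex.norm_real, Real.norm_eq_abs, abs_of_nonneg]
        exact mul_nonneg (by linarith) (Real.exp_pos _).le
      rw [hn]
      calc (Real.exp t - K) * Real.exp (-ui * t)
          ≤ Real.exp t * Real.exp (-ui * t) := by
            nlinarith [Real.exp_pos (-ui * t)]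
        _ = Real.exp (-(ui - 1) * t) := by rw [← Real.exp_add]; congr 1; ring
  have hFT : ∀ ξ : ℝ, 𝓕 h ξ = callPayoffFT K (((-(2 * Real.pi * ξ) : ℝ) : ℂ) + Complex.I * ui) := by
    intro ξ
    rw [Real.fourier_real_eq_integral_exp_smul]
    set u : ℂ := ((-(2 * Real.pi * ξ) : ℝ) : ℂ) + Complex.I * ui with hu
    have hium : u.im = ui := by simp [hu]
    rw [← payoff_ft K hK u (by rw [hium]; exact hui)]
    congr 1
    ext t
    rw [smul_eq_mul, hh]
    simp only
    push_cast
    rw [mul_comm (Complex.exp _), mul_assoc, ← Complex.exp_add]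
    congr 2
    rw [hu]
    push_cast
    linear_combination (-(ui:ℂ) * t) * Complex.I_sq
  have h'int : Integrable (𝓕 h) := by
    have heq2 : 𝓕 h = fun ξ : ℝ =>
        callPayoffFT K ((((-(2 * Real.pi)) * ξ : ℝ) : ℂ) + Complex.I * ui) := by
      ext ξ
      rw [hFT ξ]
      norm_num
    rw [heq2]
    exact (contour_integrable K ui hK hui).comp_mul_left'
      (neg_ne_zero.mpr (by positivity : (2 * Real.pi : ℝ) ≠ 0))
  have hinv : 𝓕⁻ (𝓕 h) s = h s := hint.fourierInv_fourier_eq h'int hcont.continuousAt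
  set G : ℝ → ℂ := fun ur =>
    callPayoffFT K ((ur:ℂ) + Complex.I * ui) * Complex.exp (-Complex.I * ur * s) with hG
  have hcomp : ∀ ξ : ℝ, G ((-(2 * Real.pi)) * ξ)
      = Complex.exp (((-2 * Real.pi * ξ * (-s) : ℝ) : ℂ) * Complex.I) • 𝓕 h ξ := by
    intro ξ
    rw [hG]
    simp only
    rw [hFT ξ, smul_eq_mul, mul_comm (Complex.exp _)]
    congr 2
    · norm_num
    · push_cast
      ring
  have hval : ∫ x : ℝ, G ((-(2 * Real.pi)) * x) = h s := by
    rw [← hinv, Real.fourierInv_eq_fourier_neg,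
      Real.fourier_real_eq_integral_exp_smul]
    exact integral_congr_ae (Eventually.of_forall hcomp)
  have hchg := MeasureTheory.Measure.integral_comp_mul_left G (-(2 * Real.pi))
  rw [hval] at hchg
  have habs : |(-(2 * Real.pi))⁻¹| = (2 * Real.pi)⁻¹ := by
    rw [abs_inv, abs_neg, abs_of_pos (by positivity)]
  rw [habs] at hchg
  have hfin : ∫ ur : ℝ, G ur = (2 * Real.pi : ℝ) • h s := by
    rw [hchg, smul_smul, mul_inv_cancel₀ (by positivity : (2 * Real.pi : ℝ) ≠ 0), one_smul]
  rw [show (∫ ur : ℝ, callPayoffFT K ((ur:ℂ) + Complex.I * ui)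
      * Complex.exp (-Complex.I * ur * s)) = ∫ ur : ℝ, G ur from rfl, hfin,
    Complex.real_smul, hh]

/-- Parseval/Plancherel pricing formula along the shifted contour `Im u = u_i`:
the discounted call price `e^{-rT} ∫ max(e^s - K, 0) q(s) ds` equals
`(e^{-rT}/(2π)) ∫_ℝ Ĉ_T(u_r + i u_i) q̂(-(u_r + i u_i)) du_r`. -/
theorem parseval_call_pricing (K r T : ℝ) (hK : 0 < K) (ui : ℝ) (hui : 1 < ui)
    (q : ℝ → ℝ) (hq_nonneg : ∀ s, 0 ≤ q s) (hq_prob : (∫ s : ℝ, q s) = 1)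
    (hq_int : Integrable (fun s : ℝ => Real.exp (ui * s) * q s))
    (hInv : ∀ s : ℝ, (q s : ℂ) = (1 / (2 * (Real.pi : ℂ))) *
      ∫ ur : ℝ, Complex.exp (-Complex.I * ((ur : ℂ) + Complex.I * (ui : ℂ)) * (s : ℂ)) *
        genCharFun q ((ur : ℂ) + Complex.I * (ui : ℂ))) :
    ((Real.exp (-r * T) * ∫ s : ℝ, max (Real.exp s - K) 0 * q s : ℝ) : ℂ)
      = ((Real.exp (-r * T) : ℝ) : ℂ) / (2 * (Real.pi : ℂ)) *
          ∫ ur : ℝ, callPayoffFT K ((ur : ℂ) + Complex.I * (ui : ℂ)) *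
            genCharFun q (-((ur : ℂ) + Complex.I * (ui : ℂ))) := by
  set F : ℝ → ℂ := fun ur => callPayoffFT K ((ur:ℂ) + Complex.I * ui) with hF
  set g : ℝ → ℝ := fun s => Real.exp (ui * s) * q s with hg
  have hgi : Integrable g := hq_int
  have hD : ∀ ur : ℝ, genCharFun q (-((ur:ℂ) + Complex.I * ui))
      = ∫ s : ℝ, Complex.exp (-Complex.I * ur * s) * ((g s : ℝ) : ℂ) := by
    intro ur
    unfold genCharFun
    refine integral_congr_ae (Eventually.of_forall fun s => ?_)
    dsimp only
    rw [show Complex.I * -((ur:ℂ) + Complex.I * ↑ui) * ↑s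
        = -Complex.I * ↑ur * ↑s + ((ui * s : ℝ) : ℂ) by
      push_cast; linear_combination (-(ui:ℂ) * s) * Complex.I_sq]
    rw [Complex.exp_add, hg]
    push_cast
    ring
  have hΦ : Integrable (fun p : ℝ × ℝ =>
      F p.1 * (Complex.exp (-Complex.I * p.1 * p.2) * ((g p.2 : ℝ) : ℂ)))
      (volume.prod volume) := by
    have hbound : Integrable (fun p : ℝ × ℝ => ‖F p.1‖ * ‖g p.2‖) (volume.prod volume) :=
      ((contour_integrable K ui hK hui).norm).mul_prod hgi.norm
    apply Integrable.mono' hbound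
    · apply AEStronglyMeasurable.mul
      · exact ((contour_continuous K ui hui).comp continuous_fst).aestronglyMeasurable
      · apply AEStronglyMeasurable.mul
        · exact (Complex.continuous_exp.comp (by continuity :
            Continuous (fun p : ℝ × ℝ => -Complex.I * p.1 * p.2))).aestronglyMeasurable
        · exact Complex.continuous_ofReal.comp_aestronglyMeasurable
            hgi.aestronglyMeasurable.comp_snd
    · filter_upwards with p
      rw [norm_mul, norm_mul]
      have h1 : ‖Complex.exp (-Complex.I * p.1 * p.2)‖ = 1 := by
        rw [Complex.norm_exp]
        have : (-Complex.I * p.1 * p.2).re = 0 := by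
          simp [Complex.mul_re, Complex.mul_im]
        rw [this, Real.exp_zero]
      rw [h1, one_mul, Complex.norm_real]
  have hswap : (∫ ur : ℝ, F ur * genCharFun q (-((ur:ℂ) + Complex.I * ui)))
      = ∫ s : ℝ, ((2 * Real.pi : ℝ) : ℂ) * ((max (Real.exp s - K) 0 * q s : ℝ) : ℂ) := by
    calc (∫ ur : ℝ, F ur * genCharFun q (-((ur:ℂ) + Complex.I * ui)))
        = ∫ ur : ℝ, ∫ s : ℝ, F ur * (Complex.exp (-Complex.I * ur * s) * ((g s : ℝ) : ℂ)) := by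
          refine integral_congr_ae (Eventually.of_forall fun ur => ?_)
          dsimp only
          rw [hD ur, ← integral_const_mul]
      _ = ∫ s : ℝ, ∫ ur : ℝ, F ur * (Complex.exp (-Complex.I * ur * s) * ((g s : ℝ) : ℂ)) :=
          integral_integral_swap hΦ
      _ = ∫ s : ℝ, ((2 * Real.pi : ℝ) : ℂ) * ((max (Real.exp s - K) 0 * q s : ℝ) : ℂ) := by
          refine integral_congr_ae (Eventually.of_forall fun s => ?_)
          dsimp only
          rw [show (fun ur : ℝ => F ur * (Complex.exp (-Complex.I * ur * s) * ((g s : ℝ) : ℂ)))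
              = fun ur : ℝ => (F ur * Complex.exp (-Complex.I * ur * s)) * ((g s : ℝ) : ℂ) by
            funext ur; ring]
          rw [integral_mul_const, hF]
          rw [contour_inversion K ui hK hui s]
          have hre : (max (Real.exp s - K) 0 * Real.exp (-ui * s)) * g s
              = max (Real.exp s - K) 0 * q s := by
            have hee : Real.exp (-ui * s) * Real.exp (ui * s) = 1 := by
              rw [← Real.exp_add]; simp
            rw [hg]
            linear_combination (max (Real.exp s - K) 0 * q s) * hee
          rw [mul_assoc, ← Complex.ofReal_mul, hre]
  rw [hswap, integral_const_mul]
  have hOR : (∫ a : ℝ, ((max (Real.exp a - K) 0 * q a : ℝ) : ℂ))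
      = ((∫ a : ℝ, max (Real.exp a - K) 0 * q a : ℝ) : ℂ) := integral_ofReal
  rw [hOR]
  have h2π : ((Real.pi : ℂ)) ≠ 0 := by
    norm_cast
    exact Real.pi_ne_zero
  push_cast
  field_simp
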